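/- For every integer n with |n| ≥ 2, the image of X₂ = {z ∈ ℂ : |z| > 1} ∪ {∞} under B₂^n : z ↦ z/(2nz+1) is contained in K₁ = {z : |z| ≤ 1/2}. -/

import Mathlib

open OnePoint

/-- The matrix `A_λ = [[1,λ],[0,1]]` in `SL₂(ℂ)`. -/
def Amat (lam : ℂ) : Matrix.SpecialLinearGroup (Fin 2) ℂ :=
  ⟨!![1, lam; 0, 1], by simp [Matrix.det_fin_two_of]⟩

/-- The matrix `B_μ = [[1,0],[μ,1]]` in `SL₂(ℂ)`. -/
def Bmat (mu : ℂ) : Matrix.SpecialLinearGroup (Fin 2) ℂ :=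
  ⟨!![1, 0; mu, 1], by simp [Matrix.det_fin_two_of]⟩

/-- The action of `SL₂(ℂ)` on the extended complex plane `ℂ ∪ {∞}`
by Möbius transformations. -/
noncomputable def moebius (g : Matrix.SpecialLinearGroup (Fin 2) ℂ) (z : OnePoint ℂ) : OnePoint ℂ :=
  OnePoint.rec
    (if g.1 1 0 = 0 then ∞ else ((g.1 0 0 / g.1 1 0 : ℂ) : OnePoint ℂ))
    (fun w => if g.1 1 0 * w + g.1 1 1 = 0 then ∞
      else (((g.1 0 0 * w + g.1 0 1) / (g.1 1 0 * w + g.1 1 1) : ℂ) : OnePoint ℂ)) z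

lemma Bmat_mul (a b : ℂ) : Bmat a * Bmat b = Bmat (a + b) := by
  ext i j
  rw [Matrix.SpecialLinearGroup.coe_mul]
  fin_cases i <;> fin_cases j <;> simp [Bmat, Matrix.mul_fin_two]

lemma Bmat_zpow (a : ℂ) (n : ℤ) : Bmat a ^ n = Bmat (n * a) := by
  have h1 : ∀ m : ℕ, Bmat a ^ m = Bmat (m * a) := by
    intro m
    induction m with
    | zero => rw [pow_zero]; ext i j; simp [Bmat]; fin_cases i <;> fin_cases j <;> simp
    | succ k ih => rw [pow_succ, ih, Bmat_mul]; push_cast; ring_nf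
  induction n using Int.rec with
  | ofNat m => simpa using h1 m
  | negSucc m =>
    have : Bmat a ^ (Int.negSucc m) * Bmat ((m+1 : ℕ) * a) = 1 := by
      rw [← h1, ← zpow_natCast, ← zpow_add, Int.negSucc_eq]
      rw [show -((m:ℤ)+1) + ((m+1:ℕ):ℤ) = 0 by push_cast; ring]
      exact zpow_zero _
    have h2 : Bmat ((Int.negSucc m) * a) * Bmat ((m+1 : ℕ) * a) = 1 := by
      rw [Bmat_mul]
      have : (Int.negSucc m : ℂ) * a + (m+1 : ℕ) * a = 0 := by
        rw [Int.negSucc_eq]; push_cast; ring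
      rw [this]
      ext i j; simp [Bmat]; fin_cases i <;> fin_cases j <;> simp
    exact mul_right_cancel (h2 ▸ this)

/-- For every integer `n` with `|n| ≥ 2`, the image of
`X₂ = {|z| > 1} ∪ {∞}` under `B₂^n : z ↦ z/(2nz+1)` is contained in `K₁ = {|z| ≤ 1/2}`. -/
theorem stmt_4 (n : ℤ) (hn : 2 ≤ |n|)
    (z : OnePoint ℂ)
    (hz : z ∈ ((↑) : ℂ → OnePoint ℂ) '' {u : ℂ | 1 < ‖u‖} ∪ {∞}) :
    ∃ u : ℂ, moebius (Bmat 2 ^ n) z = u ∧ ‖u‖ ≤ 1 / 2 := by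
  rw [Bmat_zpow]
  have habs : (4:ℝ) ≤ ‖((n:ℂ) * 2)‖ := by
    rw [norm_mul]
    have : ‖(n:ℂ)‖ = |(n:ℝ)| := by
      exact Complex.norm_intCast n
    rw [this]
    have : (2:ℝ) ≤ |(n:ℝ)| := by exact_mod_cast (by exact_mod_cast hn : (2:ℝ) ≤ |(n:ℤ)|)
    simp [Complex.norm_two]
    nlinarith [abs_nonneg (n:ℝ)]
  rcases hz with ⟨w, hw, rfl⟩ | hz
  · have hw1 : 1 < ‖w‖ := hw
    set c : ℂ := (n:ℂ) * 2
    have hden : 3 * ‖w‖ - 1 ≤ ‖c * w + 1‖ := by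
      have h1 : ‖c*w‖ ≤ ‖c*w + 1‖ + 1 := by
        have := norm_add_le (c*w+1) (-1)
        simpa using this
      have : 4 * ‖w‖ ≤ ‖c*w‖ := by
        rw [norm_mul]; nlinarith [norm_nonneg w]
      simp at h1
      nlinarith
    have hdpos : 0 < ‖c * w + 1‖ := by nlinarith
    have hdne : c * w + 1 ≠ 0 := by
      intro h; rw [h] at hdpos; simp at hdpos
    refine ⟨w / (c * w + 1), ?_, ?_⟩
    · simp only [moebius, Bmat, OnePoint.rec]
      simp [hdne]
    · rw [norm_div]
      rw [div_le_iff₀ hdpos]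
      nlinarith
  · rw [Set.mem_singleton_iff] at hz
    subst hz
    have hcne : (n:ℂ) * 2 ≠ 0 := by
      intro h; rw [h] at habs; simp at habs; linarith
    refine ⟨1 / ((n:ℂ) * 2), ?_, ?_⟩
    · simp only [moebius, Bmat, OnePoint.rec]
      simp [hcne]
    · rw [norm_div]
      simp only [norm_one]
      rw [div_le_iff₀ (by positivity : (0:ℝ) < ‖(n:ℂ)*2‖)]
      nlinarith
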